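/- If A is a module over the group ring RG on which G acts trivially, then A is a Cohn local RG-module: for every homomorphism α : F₀ → F₁ of finitely generated free RG-modules of equal rank such that 1_R ⊗ α : R ⊗_{RG} F₀ → R ⊗_{RG} F₁ is an isomorphism, and every f : F₀ → A, there is a unique g : F₁ → A with f = g ∘ α. -/

import Mathlib

open scoped BigOperators

/-- If `A` is a module over the group ring `RG` on which `G` acts trivially, then `A`
is a Cohn local `RG`-module: for every `RG`-linear map `α : F₀ → F₁` between finitely
generated free `RG`-modules of equal rank which becomes an isomorphism after applying
`R ⊗_{RG} -` (equivalently, whose matrix becomes invertible under the augmentation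
`ε : RG → R`), and every `f : F₀ → A`, there is a unique `g : F₁ → A` with
`f = g ∘ α`. -/
theorem stmt_13 (R : Type) [CommRing R] (G : Type) [Group G]
    (A : Type) [AddCommGroup A] [Module (MonoidAlgebra R G) A]
    (htriv : ∀ (g : G) (a : A), (MonoidAlgebra.of R G g) • a = a)
    (n : ℕ)
    (α : (Fin n → MonoidAlgebra R G) →ₗ[MonoidAlgebra R G]
          (Fin n → MonoidAlgebra R G))
    (hα : Function.Bijective (fun (v : Fin n → R) (i : Fin n) =>
      ∑ j : Fin n, (MonoidAlgebra.lift R R G 1) ((α (Pi.single j 1)) i) * v j))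
    (f : (Fin n → MonoidAlgebra R G) →ₗ[MonoidAlgebra R G] A) :
    ∃! g : (Fin n → MonoidAlgebra R G) →ₗ[MonoidAlgebra R G] A,
      f = g.comp α := by
  classical
  set ε : MonoidAlgebra R G →ₐ[R] R := MonoidAlgebra.lift R R G 1 with hε
  -- the action of `RG` on `A` factors through the augmentation `ε`
  have key : ∀ (x : MonoidAlgebra R G) (a : A),
      x • a = (MonoidAlgebra.single (1:G) (ε x)) • a := by
    intro x a
    induction x using MonoidAlgebra.induction_linear with
    | zero => simp
    | add p q hp hq =>
        rw [map_add, show (MonoidAlgebra.single (1:G) (ε p + ε q))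
            = MonoidAlgebra.single (1:G) (ε p) + MonoidAlgebra.single (1:G) (ε q)
            from MonoidAlgebra.single_add _ _ _, add_smul, add_smul, hp, hq]
    | single g c =>
        have h1 : (MonoidAlgebra.single g c : MonoidAlgebra R G)
            = MonoidAlgebra.single (1:G) c * MonoidAlgebra.single g 1 := by
          rw [MonoidAlgebra.single_mul_single, one_mul, mul_one]
        have h2 : ε (MonoidAlgebra.single g c) = c := by simp [hε]
        have h3 : (MonoidAlgebra.single g (1:R)) • a = a := htriv g a
        rw [h2, h1, mul_smul, h3]
  -- the matrix of `α` under the augmentation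
  set M : Matrix (Fin n) (Fin n) R :=
    Matrix.of (fun i j => ε ((α (Pi.single j 1)) i)) with hMdef
  have hbij : Function.Bijective (Matrix.toLin' M) := by
    have h : ⇑(Matrix.toLin' M) = fun v i => ∑ j, M i j * v j := by
      ext v i
      simp [Matrix.toLin'_apply, Matrix.mulVec, dotProduct]
    rw [h]; exact hα
  set e : (Fin n → R) ≃ₗ[R] (Fin n → R) := LinearEquiv.ofBijective _ hbij with he
  set N : Matrix (Fin n) (Fin n) R :=
    LinearMap.toMatrix' (e.symm : (Fin n → R) →ₗ[R] (Fin n → R)) with hN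
  have hM : LinearMap.toMatrix' (e : (Fin n → R) →ₗ[R] (Fin n → R)) = M := by
    have h1 : (e : (Fin n → R) →ₗ[R] (Fin n → R)) = Matrix.toLin' M := rfl
    rw [h1, LinearMap.toMatrix'_toLin']
  have hMN : M * N = 1 := by
    rw [← hM, hN, ← LinearMap.toMatrix'_comp]
    have : (e : (Fin n → R) →ₗ[R] (Fin n → R)).comp
        (e.symm : (Fin n → R) →ₗ[R] (Fin n → R)) = LinearMap.id := by
      ext v : 1
      simp
    rw [this, LinearMap.toMatrix'_id]
  have hNM : N * M = 1 := by
    rw [← hM, hN, ← LinearMap.toMatrix'_comp]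
    have : (e.symm : (Fin n → R) →ₗ[R] (Fin n → R)).comp
        (e : (Fin n → R) →ₗ[R] (Fin n → R)) = LinearMap.id := by
      ext v : 1
      simp
    rw [this, LinearMap.toMatrix'_id]
  -- standard basis
  set eS : Fin n → (Fin n → MonoidAlgebra R G) := fun i => Pi.single i 1 with heS
  -- a collapsing computation used twice
  have collapse : ∀ (c : Fin n → R) (d : Fin n → Fin n → R) (x : Fin n → A),
      (∑ j, (MonoidAlgebra.single (1:G) (c j)) •
        ∑ i, (MonoidAlgebra.single (1:G) (d i j)) • x i)
      = ∑ i, (MonoidAlgebra.single (1:G) (∑ j, c j * d i j)) • x i := by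
    intro c d x
    have h1 : ∀ j, (MonoidAlgebra.single (1:G) (c j)) •
        ∑ i, (MonoidAlgebra.single (1:G) (d i j)) • x i
        = ∑ i, (MonoidAlgebra.single (1:G) (c j * d i j)) • x i := by
      intro j
      rw [Finset.smul_sum]
      refine Finset.sum_congr rfl fun i _ => ?_
      rw [smul_smul, MonoidAlgebra.single_mul_single, one_mul]
    simp_rw [h1]
    rw [Finset.sum_comm]
    refine Finset.sum_congr rfl fun i _ => ?_
    rw [show (MonoidAlgebra.single (1:G) (∑ j, c j * d i j))
        = ∑ j, MonoidAlgebra.single (1:G) (c j * d i j) from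
        map_sum (MonoidAlgebra.singleAddHom (1:G)) _ _, Finset.sum_smul]
  -- expansion of any linear map applied to `α (eS j)`
  have expand : ∀ (h : (Fin n → MonoidAlgebra R G) →ₗ[MonoidAlgebra R G] A) (j : Fin n),
      h (α (eS j)) = ∑ i, (MonoidAlgebra.single (1:G) (M i j)) • h (eS i) := by
    intro h j
    have hv : α (eS j) = ∑ i, (α (eS j) i) • eS i := by
      ext k
      simp [heS, Pi.single_apply, Finset.sum_ite_eq]
    rw [hv, map_sum]
    refine Finset.sum_congr rfl fun i _ => ?_
    rw [map_smul, key]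
    rfl
  -- delta collapse
  have delta : ∀ (x : Fin n → A) (k : Fin n),
      (∑ i, (MonoidAlgebra.single (1:G) (if i = k then (1:R) else 0)) • x i) = x k := by
    intro x k
    have : ∀ i, (MonoidAlgebra.single (1:G) (if i = k then (1:R) else 0)) • x i
        = if i = k then x i else 0 := by
      intro i
      split
      · rw [show MonoidAlgebra.single (1:G) (1:R) = 1 from rfl, one_smul]
      · rw [show MonoidAlgebra.single (1:G) (0:R) = 0 from MonoidAlgebra.single_zero 1, zero_smul]
    simp_rw [this]
    simp
  -- the candidate
  set b : Fin n → A := fun k =>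
    ∑ j, (MonoidAlgebra.single (1:G) (N j k)) • f (eS j) with hb
  set g : (Fin n → MonoidAlgebra R G) →ₗ[MonoidAlgebra R G] A :=
    { toFun := fun v => ∑ i, v i • b i
      map_add' := by
        intro v w
        simp [add_smul, Finset.sum_add_distrib]
      map_smul' := by
        intro c v
        simp [Finset.smul_sum, mul_smul] } with hgdef
  have hgb : ∀ i, g (eS i) = b i := by
    intro i
    show (∑ i', (eS i) i' • b i') = b i
    have : ∀ i', (eS i) i' • b i' = if i' = i then b i' else 0 := by
      intro i'
      rw [heS]
      simp only [Pi.single_apply]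
      split
      · rw [one_smul]
      · rw [zero_smul]
    simp_rw [this]
    simp
  -- `g` works
  have hgsol : f = g.comp α := by
    refine Module.Basis.ext (Pi.basisFun (MonoidAlgebra R G) (Fin n)) fun j => ?_
    have hbas : (Pi.basisFun (MonoidAlgebra R G) (Fin n)) j = eS j := by
      simp [heS]
    rw [hbas, LinearMap.comp_apply, expand g j]
    simp_rw [hgb, hb]
    rw [collapse (fun i => M i j) N (fun k => f (eS k))]
    have hδ : ∀ k, (∑ i, M i j * N k i) = if k = j then (1:R) else 0 := by
      intro k
      have hcomm : (∑ i, M i j * N k i) = ∑ i, N k i * M i j :=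
        Finset.sum_congr rfl fun i _ => mul_comm _ _
      rw [hcomm, ← Matrix.mul_apply, hNM, Matrix.one_apply]
    simp_rw [hδ]
    rw [delta (fun k => f (eS k)) j]
  refine ⟨g, hgsol, ?_⟩
  intro g' hg'
  refine Module.Basis.ext (Pi.basisFun (MonoidAlgebra R G) (Fin n)) fun k => ?_
  have hbas : (Pi.basisFun (MonoidAlgebra R G) (Fin n)) k = eS k := by
    simp [heS]
  rw [hbas, hgb k, hb]
  show g' (eS k) = ∑ j : Fin n, MonoidAlgebra.single (1:G) (N j k) • f (eS j)
  have hfj : ∀ j, f (eS j) = ∑ i, (MonoidAlgebra.single (1:G) (M i j)) • g' (eS i) := by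
    intro j
    rw [hg', LinearMap.comp_apply, expand g' j]
  rw [Finset.sum_congr rfl fun j _ => by rw [hfj j]]
  rw [collapse (fun j => N j k) M (fun i => g' (eS i))]
  have hδ : ∀ i, (∑ j, N j k * M i j) = if i = k then (1:R) else 0 := by
    intro i
    have hcomm : (∑ j, N j k * M i j) = ∑ j, M i j * N j k :=
      Finset.sum_congr rfl fun j _ => mul_comm _ _
    rw [hcomm, ← Matrix.mul_apply, hMN, Matrix.one_apply]
  simp_rw [hδ]
  rw [delta (fun i => g' (eS i)) k]
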